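/- Let X be a Hilbert space, ε₀ > 0, and L : [0,ε₀) → B(X) a continuously differentiable family of Fredholm operators such that L(ε) is invertible for ε ∈ (0,ε₀), L(0) has Riesz number one (N(L(0)²) = N(L(0))), and f : [0,ε₀) → X continuously differentiable with f(ε) ∈ R(L(ε)) for all ε. Let P be the projection onto N := N(L(0)) along the direct sum X = N ⊕ R(L(0)), and assume PL'(0)|_N : N → N is an isomorphism. Then v(ε) := L(ε)⁻¹f(ε) extends continuously to ε = 0, and v(0) is the unique solution of the system L(0)v(0) = f(0), PL'(0)v(0) = Pf'(0). -/

import Mathlib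

theorem slope_cont_aux {F : Type*} [NormedAddCommGroup F] [NormedSpace ℝ F]
    {g : ℝ → F} {g' : ℝ → F} {b : ℝ}
    (hderiv : ∀ x ∈ Set.Ico (0:ℝ) b, HasDerivWithinAt g (g' x) (Set.Ico 0 b) x) :
    ContinuousOn (fun x => if x = 0 then g' 0 else x⁻¹ • (g x - g 0)) (Set.Ico 0 b) := by
  intro x hx
  set s := Set.Ico (0:ℝ) b
  set h : ℝ → F := fun x => if x = 0 then g' 0 else x⁻¹ • (g x - g 0) with hh
  by_cases hx0 : x = 0
  · subst hx0
    rw [← continuousWithinAt_diff_self]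
    have h1 : Filter.Tendsto (slope g 0) (nhdsWithin 0 (s \ {0})) (nhds (g' 0)) :=
      hasDerivWithinAt_iff_tendsto_slope.mp (hderiv 0 hx)
    have h2 : Filter.Tendsto h (nhdsWithin 0 (s \ {0})) (nhds (g' 0)) := by
      refine h1.congr' ?_
      filter_upwards [self_mem_nhdsWithin] with y hy
      have hy0 : y ≠ 0 := hy.2
      simp [hh, slope, hy0, vsub_eq_sub, sub_zero]
    have : h 0 = g' 0 := by simp [hh]
    rw [ContinuousWithinAt, this]
    exact h2
  · have hgc : ContinuousOn g s := fun y hy => (hderiv y hy).continuousWithinAt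
    have hcont : ContinuousWithinAt (fun y => y⁻¹ • (g y - g 0)) s x := by
      exact (continuousWithinAt_id.inv₀ hx0).smul
        ((hgc x hx).sub continuousWithinAt_const)
    refine hcont.congr_of_eventuallyEq ?_ (by simp [hh, hx0])
    have : {y : ℝ | y ≠ 0} ∈ nhdsWithin x s :=
      mem_nhdsWithin_of_mem_nhds (isOpen_ne.mem_nhds hx0)
    filter_upwards [this] with y hy
    simp [hh, hy]

set_option maxHeartbeats 2000000 in
/-- the abstract singular perturbation lemma underlying the
limiting absorption principle.  With `L(ε)` a C¹ family of Fredholm operators,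
invertible for `ε ∈ (0,ε₀)`, `L(0)` of Riesz number one, `f(ε) ∈ R(L(ε))` a C¹
family, `P` the projection onto `N = N(L(0))` along `R(L(0))`, and `PL'(0)|_N`
an isomorphism of `N`, the solutions `v(ε) = L(ε)⁻¹f(ε)` extend continuously to
`ε = 0` and `v(0)` is the unique solution of `L(0)v = f(0)`,
`PL'(0)v = Pf'(0)`. -/
theorem singular_perturbation_lemma
    {X : Type*} [NormedAddCommGroup X] [InnerProductSpace ℂ X] [CompleteSpace X]
    (ε₀ : ℝ) (hε₀ : 0 < ε₀)
    (L L' : ℝ → X →L[ℂ] X) (f f' : ℝ → X)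
    -- continuous differentiability on [0, ε₀)
    (hLderiv : ∀ ε ∈ Set.Ico (0 : ℝ) ε₀, HasDerivWithinAt L (L' ε) (Set.Ico 0 ε₀) ε)
    (hL'cont : ContinuousOn L' (Set.Ico 0 ε₀))
    (hfderiv : ∀ ε ∈ Set.Ico (0 : ℝ) ε₀, HasDerivWithinAt f (f' ε) (Set.Ico 0 ε₀) ε)
    (hf'cont : ContinuousOn f' (Set.Ico 0 ε₀))
    -- each L(ε) is Fredholm
    (hFred : ∀ ε ∈ Set.Ico (0 : ℝ) ε₀,
      FiniteDimensional ℂ (LinearMap.ker (L ε : X →ₗ[ℂ] X)) ∧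
      IsClosed (LinearMap.range (L ε : X →ₗ[ℂ] X) : Set X) ∧
      FiniteDimensional ℂ (X ⧸ LinearMap.range ((L ε) : X →ₗ[ℂ] X)))
    -- invertibility for ε ∈ (0, ε₀)
    (hinv : ∀ ε ∈ Set.Ioo (0 : ℝ) ε₀, Function.Bijective (L ε))
    -- Riesz number one: N(L(0)²) = N(L(0))
    (hRiesz : LinearMap.ker ((L 0).comp (L 0) : X →ₗ[ℂ] X) = LinearMap.ker (L 0 : X →ₗ[ℂ] X))
    -- f(ε) ∈ R(L(ε))
    (hfran : ∀ ε ∈ Set.Ico (0 : ℝ) ε₀, f ε ∈ LinearMap.range (L ε : X →ₗ[ℂ] X))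
    -- P is the projection onto N(L(0)) along R(L(0))
    (P : X →L[ℂ] X)
    (hPN : ∀ x, P x ∈ LinearMap.ker (L 0 : X →ₗ[ℂ] X))
    (hPid : ∀ x ∈ LinearMap.ker (L 0 : X →ₗ[ℂ] X), P x = x)
    (hPR : ∀ x ∈ LinearMap.range (L 0 : X →ₗ[ℂ] X), P x = 0)
    -- PL'(0)|_N is an isomorphism of N(L(0))
    (hiso : ∀ y ∈ LinearMap.ker (L 0 : X →ₗ[ℂ] X),
      ∃! x, x ∈ LinearMap.ker (L 0 : X →ₗ[ℂ] X) ∧ P (L' 0 x) = y) :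
    ∃ v : ℝ → X, ContinuousOn v (Set.Ico 0 ε₀) ∧
      (∀ ε ∈ Set.Ioo (0 : ℝ) ε₀, L ε (v ε) = f ε) ∧
      L 0 (v 0) = f 0 ∧ P (L' 0 (v 0)) = P (f' 0) ∧
      ∀ w : X, L 0 w = f 0 → P (L' 0 w) = P (f' 0) → w = v 0 := by
  classical
  have h0s : (0:ℝ) ∈ Set.Ico (0:ℝ) ε₀ := ⟨le_refl 0, hε₀⟩
  set N : Submodule ℂ X := LinearMap.ker (L 0 : X →ₗ[ℂ] X) with hNdef
  set R : Submodule ℂ X := LinearMap.range (L 0 : X →ₗ[ℂ] X) with hRdef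
  obtain ⟨hNfin, hRclosed, hQfin⟩ := hFred 0 h0s
  haveI : FiniteDimensional ℂ N := hNfin
  haveI hRcomplete : CompleteSpace R := hRclosed.completeSpace_coe
  -- Riesz number one gives N ∩ R = 0
  have hNR : ∀ x, x ∈ N → x ∈ R → x = 0 := by
    intro x hxN hxR
    obtain ⟨y, hy⟩ := hxR
    have hyk : y ∈ LinearMap.ker ((L 0).comp (L 0) : X →ₗ[ℂ] X) := by
      have : L 0 x = 0 := hxN
      simp only [LinearMap.mem_ker, ContinuousLinearMap.coe_comp',
        Function.comp_apply]
      show L 0 (L 0 y) = 0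
      rw [show L 0 y = x from hy]; exact this
    rw [hRiesz] at hyk
    have : L 0 y = 0 := hyk
    rw [← hy]; exact this
  -- basic facts about P
  have hPP : ∀ x, P (P x) = P x := fun x => hPid _ (hPN x)
  have hPL0 : ∀ x, P (L 0 x) = 0 := fun x => hPR _ ⟨x, rfl⟩
  -- continuity of L and f
  have hLcont : ContinuousOn L (Set.Ico 0 ε₀) :=
    fun ε hε => (hLderiv ε hε).continuousWithinAt
  have hfcont : ContinuousOn f (Set.Ico 0 ε₀) :=
    fun ε hε => (hfderiv ε hε).continuousWithinAt
  -- K = ker P, a closed complement of N on which L 0 is bounded below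
  set K : Submodule ℂ X := LinearMap.ker (P : X →ₗ[ℂ] X) with hKdef
  haveI : CompleteSpace K := (ContinuousLinearMap.isClosed_ker P).completeSpace_coe
  set A : K →L[ℂ] R :=
    ((L 0).comp K.subtypeL).codRestrict R (fun x => ⟨(x : X), rfl⟩) with hAdef
  have hAinj : LinearMap.ker (A : K →ₗ[ℂ] R) = ⊥ := by
    apply LinearMap.ker_eq_bot.mpr
    intro a b hab
    have h1 : L 0 ((a : X) - (b : X)) = 0 := by
      have := congrArg (Subtype.val) hab
      simp only [hAdef, ContinuousLinearMap.coe_coe,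
        ContinuousLinearMap.coe_codRestrict_apply,
        ContinuousLinearMap.coe_comp', Function.comp_apply,
        Submodule.coe_subtypeL', Submodule.coe_subtype] at this
      rw [map_sub, show L 0 (a:X) = L 0 (b:X) from this, sub_self]
    have hmem : (a : X) - (b : X) ∈ N := h1
    have hP0 : P ((a : X) - (b : X)) = 0 := by
      rw [map_sub]
      have ha : P (a : X) = 0 := a.2
      have hb : P (b : X) = 0 := b.2
      rw [ha, hb, sub_self]
    have := hPid _ hmem
    rw [hP0] at this
    exact Subtype.ext (by rw [← sub_eq_zero]; exact this.symm)
  have hAsurj : LinearMap.range (A : K →ₗ[ℂ] R) = ⊤ := by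
    apply LinearMap.range_eq_top.mpr
    rintro ⟨r, z, hz⟩
    have hzP : P (z - P z) = 0 := by rw [map_sub, hPP, sub_self]
    refine ⟨⟨z - P z, hzP⟩, ?_⟩
    apply Subtype.ext
    simp only [hAdef, ContinuousLinearMap.coe_coe,
      ContinuousLinearMap.coe_codRestrict_apply,
      ContinuousLinearMap.coe_comp', Function.comp_apply,
      Submodule.coe_subtypeL', Submodule.coe_subtype]
    have : L 0 (P z) = 0 := hPN z
    show L 0 (z - P z) = r
    rw [map_sub, this, sub_zero]; exact hz
  set e : K ≃L[ℂ] R := ContinuousLinearEquiv.ofBijective A hAinj hAsurj with hedef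
  set C : ℝ := ‖(e.symm : R →L[ℂ] K)‖ with hCdef
  have hC0 : 0 ≤ C := by rw [hCdef]; exact norm_nonneg ((e.symm : ↥R →L[ℂ] ↥K))
  have hbound : ∀ x : K, ‖(x : X)‖ ≤ C * ‖L 0 (x : X)‖ := by
    intro x
    have hex : ((e x : X)) = L 0 (x : X) := by
      show ((A x : X)) = L 0 (x : X)
      simp only [hAdef, ContinuousLinearMap.coe_codRestrict_apply,
        ContinuousLinearMap.coe_comp', Function.comp_apply,
        Submodule.coe_subtypeL', Submodule.coe_subtype]
      rfl
    have h3 : ‖(x : X)‖ = ‖e.symm (e x)‖ := by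
      rw [e.symm_apply_apply, Submodule.coe_norm]
    rw [h3]
    calc ‖e.symm (e x)‖ ≤ C * ‖e x‖ := by
            rw [hCdef]
            exact (e.symm : R →L[ℂ] K).le_opNorm (e x)
      _ = C * ‖L 0 (x : X)‖ := by rw [← hex, Submodule.coe_norm]
  -- orthogonal complement of R
  have hcompl : IsCompl R Rᗮ := R.isCompl_orthogonal
  haveI hQfin' : FiniteDimensional ℂ (X ⧸ R) := hQfin
  haveI hRofin : FiniteDimensional ℂ (↥(Rᗮ)) :=
    LinearEquiv.finiteDimensional (Submodule.quotientEquivOfIsCompl R Rᗮ hcompl)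
  set δ : ℝ := (4 * (C + 1))⁻¹ with hδdef
  have hδpos : 0 < δ := by rw [hδdef]; positivity
  have hCδ4 : C * δ ≤ 1/4 := by
    have h4 : (0:ℝ) < 4 * (C + 1) := by positivity
    have h5 : C * δ * (4 * (C + 1)) ≤ (1/4) * (4 * (C + 1)) := by
      rw [hδdef, mul_assoc, inv_mul_cancel₀ h4.ne', mul_one]
      linarith
    exact le_of_mul_le_mul_right h5 h4
  have hfr : Module.finrank ℂ (↥(Rᗮ)) ≤ Module.finrank ℂ (↥N) := by
    by_contra hlt
    push_neg at hlt
    have hL0cw : ContinuousWithinAt L (Set.Ico 0 ε₀) 0 := hLcont 0 h0s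
    have hev : ∀ᶠ ε in nhdsWithin 0 (Set.Ico 0 ε₀), dist (L ε) (L 0) < δ :=
      Metric.tendsto_nhds.mp hL0cw δ hδpos
    have hne : (nhdsWithin (0:ℝ) (Set.Ioo 0 ε₀)).NeBot := by
      rw [← mem_closure_iff_nhdsWithin_neBot, closure_Ioo hε₀.ne]
      exact ⟨le_refl 0, hε₀.le⟩
    have hev2 : ∀ᶠ ε in nhdsWithin 0 (Set.Ioo 0 ε₀), dist (L ε) (L 0) < δ :=
      hev.filter_mono (nhdsWithin_mono 0 Set.Ioo_subset_Ico_self)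
    obtain ⟨ε₁, hdist, hε₁⟩ := (hev2.and eventually_mem_nhdsWithin).exists
    have hDnorm : ‖L ε₁ - L 0‖ < δ := by rw [← dist_eq_norm]; exact hdist
    have hbij := hinv ε₁ hε₁
    set Eε : X ≃L[ℂ] X := ContinuousLinearEquiv.ofBijective (L ε₁)
      (LinearMap.ker_eq_bot.mpr hbij.1) (LinearMap.range_eq_top.mpr hbij.2) with hEdef
    have hEcoe : ∀ z, Eε z = L ε₁ z := fun z => by
      simp only [hEdef, ← ContinuousLinearEquiv.coe_coe,
        ContinuousLinearEquiv.coe_ofBijective]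
    set ψ : (↥(Rᗮ)) →ₗ[ℂ] (↥N) :=
      LinearMap.codRestrict N
        ((P : X →ₗ[ℂ] X).comp
          (((Eε.symm : X →L[ℂ] X) : X →ₗ[ℂ] X).comp (Rᗮ.subtype)))
        (fun w => hPN _) with hψdef
    have hψninj : ¬ Function.Injective ψ := by
      intro hinj
      exact (not_le.mpr hlt) (LinearMap.finrank_le_finrank_of_injective hinj)
    obtain ⟨w₁, w₂, hw12, hwne⟩ := Function.not_injective_iff.mp hψninj
    set w := w₁ - w₂ with hwdef
    have hw0 : w ≠ 0 := sub_ne_zero.mpr hwne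
    have hψw : P (Eε.symm (w : X)) = 0 := by
      have hz : ψ w = 0 := by rw [hwdef, map_sub, hw12, sub_self]
      have hz2 := congrArg Subtype.val hz
      simpa [hψdef, LinearMap.codRestrict_apply, LinearMap.comp_apply,
        Submodule.coe_subtype] using hz2
    set x := Eε.symm (w : X) with hxdef
    have hLx : L ε₁ x = (w : X) := by
      rw [← hEcoe]; exact Eε.apply_symm_apply _
    have hxb : ‖x‖ ≤ C * ‖L 0 x‖ := hbound ⟨x, hψw⟩
    have hwx : (w : X) = L 0 x + (L ε₁ - L 0) x := by
      rw [ContinuousLinearMap.sub_apply, ← hLx]; abel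
    have hDx : ‖(L ε₁ - L 0) x‖ ≤ δ * ‖x‖ := by
      refine le_trans ((L ε₁ - L 0).le_opNorm x) ?_
      exact mul_le_mul_of_nonneg_right hDnorm.le (norm_nonneg x)
    have hL0x : ‖L 0 x‖ ≤ ‖(w:X)‖ + δ * ‖x‖ := by
      have h5 : L 0 x = (w:X) - (L ε₁ - L 0) x := by rw [hwx]; abel
      rw [h5]
      exact le_trans (norm_sub_le _ _) (by linarith)
    have hxw : ‖x‖ ≤ 2 * C * ‖(w:X)‖ := by
      have h1 : ‖x‖ ≤ C * ‖(w:X)‖ + C * δ * ‖x‖ := by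
        calc ‖x‖ ≤ C * ‖L 0 x‖ := hxb
          _ ≤ C * (‖(w:X)‖ + δ * ‖x‖) := mul_le_mul_of_nonneg_left hL0x hC0
          _ = C * ‖(w:X)‖ + C * δ * ‖x‖ := by ring
      have h6 : C * δ * ‖x‖ ≤ (1/4) * ‖x‖ :=
        mul_le_mul_of_nonneg_right hCδ4 (norm_nonneg x)
      have h7 : 0 ≤ C * ‖(w:X)‖ := mul_nonneg hC0 (norm_nonneg _)
      linarith
    have hwR : ∀ u ∈ R, inner (𝕜 := ℂ) u ((w:X)) = (0:ℂ) :=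
      (Submodule.mem_orthogonal R (w:X)).mp w.2
    have hinner : inner (𝕜 := ℂ) ((w:X)) ((w:X))
        = inner (𝕜 := ℂ) ((L ε₁ - L 0) x) ((w:X)) := by
      calc inner (𝕜:=ℂ) ((w:X)) ((w:X))
          = inner (𝕜:=ℂ) (L 0 x + (L ε₁ - L 0) x) ((w:X)) := by rw [← hwx]
        _ = inner (𝕜:=ℂ) (L 0 x) ((w:X)) + inner (𝕜:=ℂ) ((L ε₁ - L 0) x) ((w:X)) :=
            inner_add_left _ _ _
        _ = inner (𝕜:=ℂ) ((L ε₁ - L 0) x) ((w:X)) := by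
            rw [hwR (L 0 x) ⟨x, rfl⟩, zero_add]
    have hnorm2 : ‖(w:X)‖^2 ≤ δ * ‖x‖ * ‖(w:X)‖ := by
      have hself := inner_self_eq_norm_sq_to_K (𝕜:=ℂ) ((w:X))
      have h2 : ‖inner (𝕜:=ℂ) ((w:X)) ((w:X))‖ = ‖(w:X)‖^2 := by
        rw [hself, norm_pow, RCLike.norm_ofReal, abs_norm]
      calc ‖(w:X)‖^2 = ‖inner (𝕜:=ℂ) ((w:X)) ((w:X))‖ := h2.symm
        _ = ‖inner (𝕜:=ℂ) ((L ε₁ - L 0) x) ((w:X))‖ := by rw [hinner]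
        _ ≤ ‖(L ε₁ - L 0) x‖ * ‖(w:X)‖ := norm_inner_le_norm _ _
        _ ≤ δ * ‖x‖ * ‖(w:X)‖ :=
            mul_le_mul_of_nonneg_right hDx (norm_nonneg _)
    have hwpos : 0 < ‖(w:X)‖ := by
      have hcne : (w:X) ≠ 0 := fun hc => hw0 (Subtype.ext hc)
      exact norm_pos_iff.mpr hcne
    have hsq : 0 < ‖(w:X)‖ * ‖(w:X)‖ := mul_pos hwpos hwpos
    have h8 : δ * ‖x‖ ≤ δ * (2 * C * ‖(w:X)‖) :=
      mul_le_mul_of_nonneg_left hxw hδpos.le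
    have h9 : ‖(w:X)‖^2 ≤ δ * (2 * C * ‖(w:X)‖) * ‖(w:X)‖ :=
      le_trans hnorm2 (mul_le_mul_of_nonneg_right h8 (norm_nonneg _))
    have h10 : C * δ * (‖(w:X)‖ * ‖(w:X)‖) ≤ (1/4) * (‖(w:X)‖ * ‖(w:X)‖) :=
      mul_le_mul_of_nonneg_right hCδ4 hsq.le
    have h11 : ‖(w:X)‖^2 = ‖(w:X)‖ * ‖(w:X)‖ := sq ‖(w:X)‖
    have h12 : δ * (2 * C * ‖(w:X)‖) * ‖(w:X)‖
        = 2 * (C * δ * (‖(w:X)‖ * ‖(w:X)‖)) := by ring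
    linarith
  -- X = N + R
  have hmemo : ∀ y : X, y - ((R.orthogonalProjectionOnto y : X)) ∈ Rᗮ :=
    fun y => Submodule.sub_starProjection_mem_orthogonal y
  have hNsupR : ∀ x : X, ∃ n ∈ N, ∃ r ∈ R, x = n + r := by
    set π : (↥N) →ₗ[ℂ] (↥(Rᗮ)) :=
      { toFun := fun n => ⟨(n:X) - ((R.orthogonalProjectionOnto ((n:X)) : X)), hmemo _⟩
        map_add' := by
          intro a b
          apply Subtype.ext
          simp only [Submodule.coe_add, map_add, AddSubmonoid.coe_add,
            Submodule.coe_toAddSubmonoid]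
          abel
        map_smul' := by
          intro c a
          apply Subtype.ext
          simp only [Submodule.coe_smul, map_smul, RingHom.id_apply, smul_sub] }
      with hπdef
    have hπapply : ∀ n : ↥N,
        ((π n : X)) = (n:X) - ((R.orthogonalProjectionOnto ((n:X)) : X)) :=
      fun n => rfl
    have hπinj : Function.Injective π := by
      intro a b hab
      have h1 : (a:X) - ((R.orthogonalProjectionOnto ((a:X)):X))
          = (b:X) - ((R.orthogonalProjectionOnto ((b:X)):X)) := by
        rw [← hπapply, ← hπapply, hab]
      rw [sub_eq_sub_iff_sub_eq_sub] at h1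
      have haR : (a:X) - (b:X) ∈ R := by
        rw [h1]; exact sub_mem (Submodule.coe_mem _) (Submodule.coe_mem _)
      exact Subtype.ext (sub_eq_zero.mp (hNR _ (sub_mem a.2 b.2) haR))
    have hπsurj : Function.Surjective π := by
      have heq : Module.finrank ℂ (↥N) = Module.finrank ℂ (↥(Rᗮ)) :=
        le_antisymm (LinearMap.finrank_le_finrank_of_injective hπinj) hfr
      exact (LinearMap.injective_iff_surjective_of_finrank_eq_finrank heq).mp hπinj
    intro x
    obtain ⟨n, hn⟩ := hπsurj ⟨x - ((R.orthogonalProjectionOnto x : X)), hmemo x⟩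
    have h1 : (n:X) - ((R.orthogonalProjectionOnto ((n:X)):X))
        = x - ((R.orthogonalProjectionOnto x : X)) := by
      rw [← hπapply, hn]
    refine ⟨(n:X), n.2, x - (n:X), ?_, by abel⟩
    rw [sub_eq_sub_iff_sub_eq_sub] at h1
    have h2 := congrArg (fun t : X => -t) h1
    simp only [neg_sub] at h2
    rw [h2]
    exact sub_mem (Submodule.coe_mem _) (Submodule.coe_mem _)
  have hsubR : ∀ x : X, x - P x ∈ R := by
    intro x
    obtain ⟨n, hn, r, hr, hx⟩ := hNsupR x
    have hPx : P x = n := by rw [hx, map_add, hPid n hn, hPR r hr, add_zero]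
    rw [hPx, hx, add_sub_cancel_left]
    exact hr
  -- difference quotients
  set Lt : ℝ → X →L[ℂ] X := fun ε => if ε = 0 then L' 0 else ε⁻¹ • (L ε - L 0)
    with hLtdef
  set ft : ℝ → X := fun ε => if ε = 0 then f' 0 else ε⁻¹ • (f ε - f 0) with hftdef
  have hLtcont : ContinuousOn Lt (Set.Ico 0 ε₀) := by
    rw [hLtdef]; exact slope_cont_aux hLderiv
  have hftcont : ContinuousOn ft (Set.Ico 0 ε₀) := by
    rw [hftdef]; exact slope_cont_aux hfderiv
  have hLt0 : Lt 0 = L' 0 := by rw [hLtdef]; simp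
  have hft0 : ft 0 = f' 0 := by rw [hftdef]; simp
  set M : ℝ → X →L[ℂ] X := fun ε => L ε - P * (L ε) + P * (Lt ε) with hMdef
  have hMapply : ∀ ε x, M ε x = L ε x - P (L ε x) + P (Lt ε x) := by
    intro ε x
    simp [hMdef, ContinuousLinearMap.add_apply, ContinuousLinearMap.sub_apply,
      ContinuousLinearMap.mul_apply]
  set g : ℝ → X := fun ε => f ε - P (f ε) + P (ft ε) with hgdef
  have hMcont : ContinuousOn M (Set.Ico 0 ε₀) := by
    rw [hMdef]
    exact (hLcont.sub (continuousOn_const.mul hLcont)).add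
      (continuousOn_const.mul hLtcont)
  have hgcont : ContinuousOn g (Set.Ico 0 ε₀) := by
    rw [hgdef]
    exact (hfcont.sub (P.continuous.comp_continuousOn hfcont)).add
      (P.continuous.comp_continuousOn hftcont)
  have hPf0 : P (f 0) = 0 := hPR _ (hfran 0 h0s)
  have hMS : ∀ ε, ε ≠ 0 → ∀ x, M ε x = L ε x - P (L ε x) + ε⁻¹ • P (L ε x) := by
    intro ε hε x
    rw [hMapply]
    congr 1
    have h1 : Lt ε x = ε⁻¹ • (L ε x - L 0 x) := by
      rw [hLtdef]
      simp [hε, ContinuousLinearMap.smul_apply, ContinuousLinearMap.sub_apply]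
    rw [h1, smul_sub, map_sub, P.map_smul_of_tower, P.map_smul_of_tower, hPL0,
      smul_zero, sub_zero]
  have hgS : ∀ ε, ε ≠ 0 → g ε = f ε - P (f ε) + ε⁻¹ • P (f ε) := by
    intro ε hε
    rw [hgdef]
    simp only
    congr 1
    have h1 : ft ε = ε⁻¹ • (f ε - f 0) := by rw [hftdef]; simp [hε]
    rw [h1, smul_sub, map_sub, P.map_smul_of_tower, P.map_smul_of_tower, hPf0,
      smul_zero, sub_zero]
  have hScancel : ∀ (ε : ℝ), ε ≠ 0 → ∀ a b : X,
      a - P a + ε⁻¹ • P a = b - P b + ε⁻¹ • P b → a = b := by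
    intro ε hε a b hab
    have key : ∀ y : X,
        (y - P y + ε⁻¹ • P y) - P (y - P y + ε⁻¹ • P y)
          + ε • P (y - P y + ε⁻¹ • P y) = y := by
      intro y
      have hPS : P (y - P y + ε⁻¹ • P y) = ε⁻¹ • P y := by
        rw [map_add, map_sub, hPP, sub_self, zero_add, P.map_smul_of_tower, hPP]
      rw [hPS, smul_smul, mul_inv_cancel₀ hε, one_smul]
      abel
    have h2 := key a
    rw [hab, key b] at h2
    exact h2.symm
  have hM0inj : ∀ x, M 0 x = 0 → x = 0 := by
    intro x hx
    rw [hMapply, hLt0, hPL0, sub_zero] at hx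
    have h1 : L 0 x = - P (L' 0 x) := eq_neg_of_add_eq_zero_left hx
    have h2 : L 0 x ∈ N := by rw [h1]; exact neg_mem (hPN _)
    have h3 : L 0 x = 0 := hNR _ h2 ⟨x, rfl⟩
    have h4 : P (L' 0 x) = 0 := by
      have := h1; rw [h3] at this
      exact (neg_eq_zero.mp this.symm)
    obtain ⟨z, hz, huniq⟩ := hiso 0 (zero_mem N)
    have hx1 : x = z := huniq x ⟨h3, h4⟩
    have h01 : (0:X) = z := huniq 0 ⟨zero_mem N, by rw [map_zero, map_zero]⟩
    rw [hx1, ← h01]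
  have hM0surj : Function.Surjective (M 0) := by
    intro y
    obtain ⟨x₀, hx₀⟩ : ∃ x₀, L 0 x₀ = y - P y := hsubR y
    have hmem : P y - P (L' 0 x₀) ∈ N := sub_mem (hPN y) (hPN _)
    obtain ⟨nn, ⟨hnnN, hnnP⟩, -⟩ := hiso (P y - P (L' 0 x₀)) hmem
    refine ⟨x₀ + nn, ?_⟩
    rw [hMapply, hLt0, hPL0, sub_zero]
    have hLnn : L 0 nn = 0 := hnnN
    rw [map_add, map_add, map_add, hx₀, hLnn, hnnP]
    abel
  have hMbij : ∀ ε ∈ Set.Ico (0:ℝ) ε₀, Function.Bijective (M ε) := by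
    intro ε hε
    rcases eq_or_ne ε 0 with h0 | h0
    · subst h0
      constructor
      · intro a b hab
        have h2 := hM0inj (a - b) (by rw [map_sub, hab, sub_self])
        exact sub_eq_zero.mp h2
      · exact hM0surj
    · have hIoo : ε ∈ Set.Ioo (0:ℝ) ε₀ :=
        ⟨lt_of_le_of_ne hε.1 (Ne.symm h0), hε.2⟩
      constructor
      · intro a b hab
        exact (hinv ε hIoo).1 (hScancel ε h0 _ _
          (by rw [← hMS ε h0, ← hMS ε h0, hab]))
      · intro y
        obtain ⟨x, hx⟩ := (hinv ε hIoo).2 (y - P y + ε • P y)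
        refine ⟨x, ?_⟩
        rw [hMS ε h0, hx]
        have hPT : P (y - P y + ε • P y) = ε • P y := by
          rw [map_add, map_sub, hPP, sub_self, zero_add, P.map_smul_of_tower, hPP]
        rw [hPT, smul_smul, inv_mul_cancel₀ h0, one_smul]
        abel
  have hMunit : ∀ ε ∈ Set.Ico (0:ℝ) ε₀, IsUnit (M ε) := by
    intro ε hε
    have hb := hMbij ε hε
    set E2 : X ≃L[ℂ] X := ContinuousLinearEquiv.ofBijective (M ε)
      (LinearMap.ker_eq_bot.mpr hb.1) (LinearMap.range_eq_top.mpr hb.2) with hE2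
    have hE2coe : ∀ z, E2 z = M ε z := fun z => by
      simp only [hE2, ← ContinuousLinearEquiv.coe_coe,
        ContinuousLinearEquiv.coe_ofBijective]
    refine ⟨⟨M ε, (E2.symm : X →L[ℂ] X), ?_, ?_⟩, rfl⟩
    · ext z
      simp only [ContinuousLinearMap.mul_apply, ContinuousLinearMap.one_apply,
        ContinuousLinearMap.coe_coe, ContinuousLinearEquiv.coe_coe]
      rw [← hE2coe]
      exact E2.apply_symm_apply z
    · ext z
      simp only [ContinuousLinearMap.mul_apply, ContinuousLinearMap.one_apply,
        ContinuousLinearMap.coe_coe, ContinuousLinearEquiv.coe_coe]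
      rw [← hE2coe z]
      exact E2.symm_apply_apply z
  set v : ℝ → X := fun ε => (Ring.inverse (M ε)) (g ε) with hvdef
  have hMv : ∀ ε ∈ Set.Ico (0:ℝ) ε₀, M ε (v ε) = g ε := by
    intro ε hε
    have h1 : M ε * Ring.inverse (M ε) = 1 :=
      Ring.mul_inverse_cancel _ (hMunit ε hε)
    have h2 := ContinuousLinearMap.ext_iff.mp h1 (g ε)
    rw [ContinuousLinearMap.mul_apply, ContinuousLinearMap.one_apply] at h2
    rw [hvdef]
    exact h2
  have hvcont : ContinuousOn v (Set.Ico 0 ε₀) := by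
    rw [hvdef]
    refine ContinuousOn.clm_apply ?_ hgcont
    intro ε hε
    have hu := hMunit ε hε
    have h1 : ContinuousAt Ring.inverse (M ε) := by
      have h2 := NormedRing.inverse_continuousAt hu.unit
      rwa [IsUnit.unit_spec] at h2
    exact h1.comp_continuousWithinAt (hMcont ε hε)
  -- equations at 0
  have h00 : L 0 (v 0) + P (L' 0 (v 0)) = f 0 + P (f' 0) := by
    have h1 := hMv 0 h0s
    rw [hMapply, hLt0, hPL0, sub_zero] at h1
    rw [hgdef] at h1
    simp only [hft0, hPf0, sub_zero] at h1
    exact h1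
  have hdiff : L 0 (v 0) - f 0 = P (f' 0) - P (L' 0 (v 0)) := by
    rw [sub_eq_sub_iff_add_eq_add]
    rw [h00]
    abel
  have hmemRv : L 0 (v 0) - f 0 ∈ R := sub_mem ⟨v 0, rfl⟩ (hfran 0 h0s)
  have hmemNv : L 0 (v 0) - f 0 ∈ N := by
    rw [hdiff]; exact sub_mem (hPN _) (hPN _)
  have hzerov : L 0 (v 0) - f 0 = 0 := hNR _ hmemNv hmemRv
  have hveq1 : L 0 (v 0) = f 0 := sub_eq_zero.mp hzerov
  have hveq2 : P (L' 0 (v 0)) = P (f' 0) := by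
    have := hdiff; rw [hzerov] at this
    exact (sub_eq_zero.mp this.symm).symm
  refine ⟨v, hvcont, ?_, hveq1, hveq2, ?_⟩
  · intro ε hε
    have hεne : ε ≠ 0 := ne_of_gt hε.1
    have hIco : ε ∈ Set.Ico (0:ℝ) ε₀ := ⟨hε.1.le, hε.2⟩
    have h1 : M ε (v ε) = g ε := hMv ε hIco
    rw [hMS ε hεne, hgS ε hεne] at h1
    exact hScancel ε hεne _ _ h1
  · intro w hw1 hw2
    have hMw : M 0 w = M 0 (v 0) := by
      rw [hMapply, hMapply, hLt0, hPL0, hPL0, sub_zero, sub_zero, hw1, hw2,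
        hveq1, hveq2]
    have h2 := hM0inj (w - v 0) (by rw [map_sub, hMw, sub_self])
    exact sub_eq_zero.mp h2
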